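/- Let M be a module over 𝔰𝔩₂(ℂ) such that h acts diagonalizably on M, every eigenvalue of h on M is a negative real number, and every h-eigenspace is finite-dimensional. Then M is a direct sum of Verma modules: there exists a family (v_i)_{i∈I} of nonzero vectors of M with e·v_i = 0 and h·v_i = n_i·v_i for some negative real numbers n_i, such that M is the internal direct sum of the submodules N_i generated by the v_i, and for each i the vectors f^k·v_i (k ∈ ℕ) form a basis of N_i. -/

import Mathlib

namespace Sl2Aux

variable {M : Type} [AddCommGroup M] [Module ℂ M] {E H F : Module.End ℂ M}

lemma commHE (hHE : ⁅H, E⁆ = (2 : ℂ) • E) (m : M) :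
    H (E m) = E (H m) + (2 : ℂ) • E m := by
  have h := LinearMap.congr_fun hHE m
  simp only [Ring.lie_def, LinearMap.sub_apply, Module.End.mul_apply, LinearMap.smul_apply] at h
  exact sub_eq_iff_eq_add'.mp h

lemma commHF (hHF : ⁅H, F⁆ = -((2 : ℂ) • F)) (m : M) :
    H (F m) = F (H m) - (2 : ℂ) • F m := by
  have h := LinearMap.congr_fun hHF m
  simp only [Ring.lie_def, LinearMap.sub_apply, Module.End.mul_apply, LinearMap.neg_apply,
    LinearMap.smul_apply] at h
  rw [sub_eq_iff_eq_add] at h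
  rw [h]; abel

lemma commEF (hEF : ⁅E, F⁆ = H) (m : M) :
    E (F m) = F (E m) + H m := by
  have h := LinearMap.congr_fun hEF m
  simp only [Ring.lie_def, LinearMap.sub_apply, Module.End.mul_apply] at h
  exact sub_eq_iff_eq_add'.mp h

/-- weight of `F^k m` -/
lemma weight_F_pow (hHF : ⁅H, F⁆ = -((2 : ℂ) • F)) {m : M} {μ : ℂ}
    (hm : H m = μ • m) (k : ℕ) :
    H ((F ^ k) m) = (μ - 2 * k) • (F ^ k) m := by
  induction k with
  | zero => simpa using hm
  | succ k ih =>
    have h1 : (F ^ (k+1)) m = F ((F ^ k) m) := by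
      rw [pow_succ']; rfl
    rw [h1, commHF hHF, ih]
    rw [map_smul]
    push_cast
    rw [← sub_smul]
    ring_nf


lemma weight_E_pow (hHE : ⁅H, E⁆ = (2 : ℂ) • E) {m : M} {μ : ℂ}
    (hm : H m = μ • m) (k : ℕ) :
    H ((E ^ k) m) = (μ + 2 * k) • (E ^ k) m := by
  induction k with
  | zero => simpa using hm
  | succ k ih =>
    have h1 : (E ^ (k+1)) m = E ((E ^ k) m) := by rw [pow_succ']; rfl
    rw [h1, commHE hHE, ih, map_smul]
    push_cast
    rw [← add_smul]
    ring_nf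

/-- `E` applied to `F^(k+1) v` for a primitive vector `v` of weight `μ`. -/
lemma E_F_pow (hHE : ⁅H, E⁆ = (2 : ℂ) • E) (hHF : ⁅H, F⁆ = -((2 : ℂ) • F))
    (hEF : ⁅E, F⁆ = H) {m : M} {μ : ℂ} (hm : H m = μ • m) (he : E m = 0) (k : ℕ) :
    E ((F ^ (k + 1)) m) = (((k : ℂ) + 1) * (μ - k)) • (F ^ k) m := by
  induction k with
  | zero =>
    have h1 : (F ^ 1) m = F m := by simp
    rw [h1, commEF hEF, he, map_zero, hm]
    simp
  | succ k ih =>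
    have h1 : (F ^ (k+2)) m = F ((F ^ (k+1)) m) := by rw [pow_succ']; rfl
    rw [h1, commEF hEF, ih, map_smul, weight_F_pow hHF hm (k+1)]
    have h2 : (F ^ (k+1)) m = F ((F ^ k) m) := by rw [pow_succ']; rfl
    rw [h2, ← add_smul]
    congr 1
    push_cast
    ring

lemma Ek_Fk (hHE : ⁅H, E⁆ = (2 : ℂ) • E) (hHF : ⁅H, F⁆ = -((2 : ℂ) • F))
    (hEF : ⁅E, F⁆ = H) {m : M} {μ : ℂ} (hm : H m = μ • m) (he : E m = 0)
    (hre : μ.re < 0) (k : ℕ) :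
    ∃ c : ℂ, c ≠ 0 ∧ (E ^ k) ((F ^ k) m) = c • m := by
  induction k with
  | zero => exact ⟨1, one_ne_zero, by simp⟩
  | succ k ih =>
    obtain ⟨c, hc, hck⟩ := ih
    refine ⟨(((k : ℂ) + 1) * (μ - k)) * c, ?_, ?_⟩
    · apply mul_ne_zero _ hc
      apply mul_ne_zero
      · exact Nat.cast_add_one_ne_zero k
      · intro h
        have := congrArg Complex.re h
        simp at this
        have : (0:ℝ) ≤ (k:ℝ) := Nat.cast_nonneg k
        linarith [congrArg Complex.re h]
    · have h1 : (E ^ (k+1)) ((F ^ (k+1)) m) = (E ^ k) (E ((F ^ (k+1)) m)) := by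
        rw [pow_succ]; rfl
      rw [h1, E_F_pow hHE hHF hEF hm he, map_smul, hck, smul_smul]

lemma E_pow_F_pow_zero (hHE : ⁅H, E⁆ = (2 : ℂ) • E) (hHF : ⁅H, F⁆ = -((2 : ℂ) • F))
    (hEF : ⁅E, F⁆ = H) {m : M} {μ : ℂ} (hm : H m = μ • m) (he : E m = 0)
    (hre : μ.re < 0) {k j : ℕ} (hkj : k < j) :
    (E ^ j) ((F ^ k) m) = 0 := by
  obtain ⟨c, hc, hck⟩ := Ek_Fk hHE hHF hEF hm he hre k
  have h1 : (E ^ (k+1)) ((F ^ k) m) = 0 := by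
    have : (E ^ (k+1)) ((F ^ k) m) = E ((E ^ k) ((F ^ k) m)) := by rw [pow_succ']; rfl
    rw [this, hck, map_smul, he, smul_zero]
  obtain ⟨d, rfl⟩ := Nat.exists_eq_add_of_le hkj  -- j = (k+1) + d? check
  have h2 : (E ^ (k + 1 + d)) ((F ^ k) m) = (E ^ d) ((E ^ (k+1)) ((F ^ k) m)) := by
    rw [show k+1+d = d+(k+1) by ring, pow_add]; rfl
  rw [h2, h1, map_zero]

lemma F_pow_ne_zero (hHE : ⁅H, E⁆ = (2 : ℂ) • E) (hHF : ⁅H, F⁆ = -((2 : ℂ) • F))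
    (hEF : ⁅E, F⁆ = H) {m : M} {μ : ℂ} (hm : H m = μ • m) (he : E m = 0)
    (hre : μ.re < 0) (hne : m ≠ 0) (k : ℕ) :
    (F ^ k) m ≠ 0 := by
  intro h
  apply hne
  obtain ⟨c, hc, hck⟩ := Ek_Fk hHE hHF hEF hm he hre k
  rw [h, map_zero] at hck
  exact (smul_eq_zero.mp hck.symm).resolve_left hc


section BigLI

variable {I : Type} {v : I → M} {lam : I → ℂ}

lemma weight_slice_LI (hHE : ⁅H, E⁆ = (2 : ℂ) • E) (hHF : ⁅H, F⁆ = -((2 : ℂ) • F))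
    (hEF : ⁅E, F⁆ = H)
    (hH : ∀ i, H (v i) = lam i • v i) (hE : ∀ i, E (v i) = 0)
    (hre : ∀ i, (lam i).re < 0)
    (hfib : ∀ μ : ℂ, LinearIndependent ℂ (fun i : {i : I // lam i = μ} => v i.val))
    (μ₀ : ℂ) :
    LinearIndependent ℂ
      (fun q : {p : I × ℕ // lam p.1 - 2 * p.2 = μ₀} => (F ^ q.val.2) (v q.val.1)) := by
  classical
  set T := {p : I × ℕ // lam p.1 - 2 * p.2 = μ₀} with hT
  set y : T → M := fun q => (F ^ q.val.2) (v q.val.1) with hy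
  rw [linearIndependent_iff']
  have top : ∀ (K : ℕ) (s : Finset T) (g : T → ℂ), (∀ p ∈ s, p.val.2 ≤ K) →
      ∑ p ∈ s, g p • y p = 0 → ∀ p ∈ s, p.val.2 = K → g p = 0 := by
    intro K s g hb hs p hp hpK
    set μ := μ₀ + 2 * K with hμ
    -- choose the scalars from Ek_Fk
    have hc : ∀ q : T, ∃ c : ℂ, c ≠ 0 ∧ (E ^ K) ((F ^ K) (v q.val.1)) = c • v q.val.1 :=
      fun q => Ek_Fk hHE hHF hEF (hH _) (hE _) (hre _) K
    choose c hc0 hceq using hc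
    have hlam : ∀ q : T, q.val.2 = K → lam q.val.1 = μ := by
      rintro ⟨⟨i, k⟩, hq⟩ h
      simp only at h
      subst h
      simpa [hμ] using sub_eq_iff_eq_add.mp hq
    set ψ : T → {i : I // lam i = μ} :=
      fun q => if h : q.val.2 = K then ⟨q.val.1, hlam q h⟩ else ⟨p.val.1, hlam p hpK⟩ with hψ
    have hback : ∀ (i : {i : I // lam i = μ}), lam ((i.val, K) : I × ℕ).1 - 2 * ((i.val, K) : I × ℕ).2 = μ₀ := by
      intro i; rw [i.prop]; simp [hμ]
    set Q : {i : I // lam i = μ} → T := fun i => ⟨(i.val, K), hback i⟩ with hQ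
    have hQψ : ∀ q : T, q.val.2 = K → Q (ψ q) = q := by
      rintro ⟨⟨i, k⟩, hq⟩ h
      simp only at h
      subst h
      simp only [hψ, hQ, dif_pos]
    -- apply E^K to the relation
    have h0 : ∑ q ∈ s, g q • (E ^ K) (y q) = 0 := by
      have := congrArg (E ^ K) hs
      simpa [map_sum] using this
    have h1 : ∑ q ∈ s.filter (fun q => q.val.2 = K), g q • (E ^ K) (y q) = 0 := by
      rw [Finset.sum_filter_of_ne]
      · exact h0
      · intro q hq hne
        by_contra hq2
        apply hne
        have hlt : q.val.2 < K := lt_of_le_of_ne (hb q hq) hq2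
        rw [hy]
        simp only
        rw [E_pow_F_pow_zero hHE hHF hEF (hH _) (hE _) (hre _) hlt, smul_zero]
    set G : {i : I // lam i = μ} → ℂ := fun i => g (Q i) * c (Q i) with hG
    have hterm : ∀ q ∈ s.filter (fun q => q.val.2 = K),
        G (ψ q) • v (ψ q).val = g q • (E ^ K) (y q) := by
      intro q hq
      have hk : q.val.2 = K := by
        have := (Finset.mem_filter.mp hq).2
        simpa using this
      have h2 : (E ^ K) (y q) = c q • v q.val.1 := by
        rw [hy]; simp only; rw [hk]; exact hceq q
      have h3 : (ψ q).val = q.val.1 := by rw [hψ]; simp [dif_pos hk]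
      rw [h2, hG]
      simp only [hQψ q hk, h3]
      rw [smul_smul]
    have hinj : ∀ q₁ ∈ s.filter (fun q => q.val.2 = K), ∀ q₂ ∈ s.filter (fun q => q.val.2 = K),
        ψ q₁ = ψ q₂ → q₁ = q₂ := by
      intro q₁ hq₁ q₂ hq₂ he
      have hk₁ : q₁.val.2 = K := by simpa using (Finset.mem_filter.mp hq₁).2
      have hk₂ : q₂.val.2 = K := by simpa using (Finset.mem_filter.mp hq₂).2
      have := congrArg Q he
      rwa [hQψ q₁ hk₁, hQψ q₂ hk₂] at this
    have hsum : ∑ i ∈ (s.filter (fun q => q.val.2 = K)).image ψ, G i • v i.val = 0 := by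
      rw [Finset.sum_image hinj]
      rw [Finset.sum_congr rfl hterm]
      exact h1
    have hpfilter : p ∈ s.filter (fun q => q.val.2 = K) := Finset.mem_filter.mpr ⟨hp, hpK⟩
    have := linearIndependent_iff'.mp (hfib μ) _ G hsum (ψ p)
      (Finset.mem_image_of_mem ψ hpfilter)
    rw [hG] at this
    simp only [hQψ p hpK] at this
    exact (mul_eq_zero.mp this).resolve_right (hc0 p)
  -- downward induction on the maximal power of `F`
  have main : ∀ (K : ℕ) (s : Finset T) (g : T → ℂ), (∀ p ∈ s, p.val.2 ≤ K) →
      ∑ p ∈ s, g p • y p = 0 → ∀ p ∈ s, g p = 0 := by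
    intro K
    induction K with
    | zero =>
      intro s g hb hs p hp
      exact top 0 s g hb hs p hp (Nat.le_zero.mp (hb p hp))
    | succ K IH =>
      intro s g hb hs p hp
      by_cases hK : p.val.2 = K + 1
      · exact top (K + 1) s g hb hs p hp hK
      · refine IH (s.filter (fun q => ¬ q.val.2 = K + 1)) g ?_ ?_ p ?_
        · intro q hq
          obtain ⟨hq1, hq2⟩ := Finset.mem_filter.mp hq
          have := hb q hq1
          omega
        · have hsplit := Finset.sum_filter_add_sum_filter_not s
            (fun q => ¬ q.val.2 = K + 1) (fun q => g q • y q)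
          have hzero : ∑ q ∈ s.filter (fun q => ¬¬ q.val.2 = K + 1), g q • y q = 0 := by
            apply Finset.sum_eq_zero
            intro q hq
            obtain ⟨hq1, hq2⟩ := Finset.mem_filter.mp hq
            rw [top (K + 1) s g hb hs q hq1 (not_not.mp hq2), zero_smul]
          rw [hzero, add_zero] at hsplit
          rw [hsplit]
          exact hs
        · exact Finset.mem_filter.mpr ⟨hp, hK⟩
  intro s g hs p hp
  exact main (s.sup (fun q => q.val.2)) s g (fun q hq => Finset.le_sup (f := fun q : T => q.val.2) hq) hs p hp



lemma full_LI (hHE : ⁅H, E⁆ = (2 : ℂ) • E) (hHF : ⁅H, F⁆ = -((2 : ℂ) • F))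
    (hEF : ⁅E, F⁆ = H)
    (hH : ∀ i, H (v i) = lam i • v i) (hE : ∀ i, E (v i) = 0)
    (hre : ∀ i, (lam i).re < 0)
    (hfib : ∀ μ : ℂ, LinearIndependent ℂ (fun i : {i : I // lam i = μ} => v i.val)) :
    LinearIndependent ℂ (fun p : I × ℕ => (F ^ p.2) (v p.1)) := by
  classical
  set wt : I × ℕ → ℂ := fun p => lam p.1 - 2 * p.2 with hwt
  have hweight : ∀ p : I × ℕ, (F ^ p.2) (v p.1) ∈ H.eigenspace (wt p) := by
    intro p
    rw [Module.End.mem_eigenspace_iff]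
    exact weight_F_pow hHF (hH p.1) p.2
  have hspan : ∀ μ : ℂ, Submodule.span ℂ
      (Set.range (fun q : {p : I × ℕ // wt p = μ} => (F ^ q.val.2) (v q.val.1)))
        ≤ H.eigenspace μ := by
    intro μ
    rw [Submodule.span_le]
    rintro m ⟨q, rfl⟩
    have := hweight q.val
    rwa [q.prop] at this
  have hd : ∀ (μ : ℂ) (t : Set ℂ), t.Finite → μ ∉ t →
      Disjoint (Submodule.span ℂ
        (Set.range (fun q : {p : I × ℕ // wt p = μ} => (F ^ q.val.2) (v q.val.1))))
      (⨆ μ' ∈ t, Submodule.span ℂ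
        (Set.range (fun q : {p : I × ℕ // wt p = μ'} => (F ^ q.val.2) (v q.val.1)))) := by
    intro μ t _ hμt
    apply Disjoint.mono (hspan μ) _ (H.eigenspaces_iSupIndep μ)
    apply iSup₂_le
    intro μ' hμ'
    refine le_trans (hspan μ') ?_
    have hne : μ' ≠ μ := fun h => hμt (h ▸ hμ')
    exact le_iSup₂ (f := fun (j : ℂ) (_ : j ≠ μ) => H.eigenspace j) μ' hne
  have h := linearIndependent_iUnion_finite (R := ℂ) (M := M) (η := ℂ)
      (ιs := fun μ => {p : I × ℕ // wt p = μ})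
      (f := fun μ q => (F ^ q.val.2) (v q.val.1))
      (fun μ => weight_slice_LI hHE hHF hEF hH hE hre hfib μ) hd
  have heq : (fun p : I × ℕ => (F ^ p.2) (v p.1)) =
      (fun ji : Σ μ : ℂ, {p : I × ℕ // wt p = μ} => (F ^ ji.2.val.2) (v ji.2.val.1)) ∘
        (Equiv.sigmaFiberEquiv wt).symm := by
    funext p; rfl
  rw [heq]
  exact h.comp _ (Equiv.injective _)

lemma exists_E_pow_zero (hHE : ⁅H, E⁆ = (2 : ℂ) • E)
    (hneg : ∀ μ : ℂ, Module.End.HasEigenvalue H μ → ∃ r : ℝ, r < 0 ∧ μ = (r : ℂ))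
    {m : M} {μ : ℂ} (hm : H m = μ • m) : ∃ j : ℕ, (E ^ j) m = 0 := by
  obtain ⟨j, hj⟩ := exists_nat_ge (-μ.re / 2)
  refine ⟨j, ?_⟩
  by_contra hne
  have hev : Module.End.HasEigenvalue H (μ + 2 * j) :=
    Module.End.hasEigenvalue_of_hasEigenvector
      ⟨Module.End.mem_eigenspace_iff.mpr (weight_E_pow hHE hm j), hne⟩
  obtain ⟨r, hr, hrμ⟩ := hneg _ hev
  have : (μ + 2 * j).re = r := by rw [hrμ]; simp
  simp only [Complex.add_re, Complex.mul_re] at this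
  simp at this
  nlinarith [this, hj, hr]

end BigLI

end Sl2Aux



/-- An `𝔰𝔩₂(ℂ)`-module on which `h` acts diagonalizably with negative real
eigenvalues and finite-dimensional eigenspaces is a direct sum of Verma modules. -/
theorem sl2_module_is_direct_sum_of_verma_modules
    (M : Type) [AddCommGroup M] [Module ℂ M]
    (E H F : Module.End ℂ M)
    (hHE : ⁅H, E⁆ = (2 : ℂ) • E)
    (hHF : ⁅H, F⁆ = -((2 : ℂ) • F))
    (hEF : ⁅E, F⁆ = H)
    (hdiag : (⨆ μ : ℂ, H.eigenspace μ) = ⊤)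
    (hneg : ∀ μ : ℂ, Module.End.HasEigenvalue H μ → ∃ r : ℝ, r < 0 ∧ μ = (r : ℂ))
    (hfin : ∀ μ : ℂ, FiniteDimensional ℂ (H.eigenspace μ)) :
    ∃ (I : Type) (v : I → M) (n : I → ℝ),
      (∀ i, v i ≠ 0) ∧
      (∀ i, n i < 0) ∧
      (∀ i, E (v i) = 0) ∧
      (∀ i, H (v i) = ((n i : ℂ)) • v i) ∧
      -- the vectors `f^k · v i` form a basis of
      -- `N i = span {f^k · v i}`, the submodule generated by `v i`:
      (∀ i, LinearIndependent ℂ (fun k : ℕ => (F ^ k) (v i))) ∧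
      (∀ i, ∀ m ∈ Submodule.span ℂ (Set.range fun k : ℕ => (F ^ k) (v i)),
          E m ∈ Submodule.span ℂ (Set.range fun k : ℕ => (F ^ k) (v i)) ∧
          H m ∈ Submodule.span ℂ (Set.range fun k : ℕ => (F ^ k) (v i)) ∧
          F m ∈ Submodule.span ℂ (Set.range fun k : ℕ => (F ^ k) (v i))) ∧
      -- `M` is the internal direct sum of the submodules `N i`:
      iSupIndep (fun i => Submodule.span ℂ (Set.range fun k : ℕ => (F ^ k) (v i))) ∧
      (⨆ i, Submodule.span ℂ (Set.range fun k : ℕ => (F ^ k) (v i))) = ⊤ := by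
  classical
  set P : ℂ → Submodule ℂ M := fun μ => LinearMap.ker E ⊓ H.eigenspace μ with hPdef
  have hPfin : ∀ μ, FiniteDimensional ℂ (P μ) := by
    intro μ
    haveI := hfin μ
    exact Submodule.finiteDimensional_of_le inf_le_right
  let d : ℂ → ℕ := fun μ => Module.finrank ℂ (P μ)
  let bb : ∀ μ : ℂ, Module.Basis (Fin (d μ)) ℂ (P μ) := fun μ =>
    haveI := hPfin μ
    Module.finBasis ℂ (P μ)
  set I : Type := {x : ℂ × ℕ // x.2 < d x.1} with hI
  set v : I → M := fun i => ((bb i.val.1 ⟨i.val.2, i.prop⟩ : P i.val.1) : M) with hv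
  set lam : I → ℂ := fun i => i.val.1 with hlamdef
  have hvmem : ∀ i, v i ∈ P (lam i) := fun i => SetLike.coe_mem _
  have hvE : ∀ i, E (v i) = 0 := fun i => LinearMap.mem_ker.mp (hvmem i).1
  have hvH : ∀ i, H (v i) = lam i • v i := fun i =>
    Module.End.mem_eigenspace_iff.mp (hvmem i).2
  have hvne : ∀ i, v i ≠ 0 := by
    intro i h
    exact (bb i.val.1).ne_zero ⟨i.val.2, i.prop⟩ (Subtype.ext h)
  have heig : ∀ i, Module.End.HasEigenvalue H (lam i) := fun i =>
    Module.End.hasEigenvalue_of_hasEigenvector ⟨(hvmem i).2, hvne i⟩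
  have hn' : ∀ i, ∃ r : ℝ, r < 0 ∧ lam i = (r : ℂ) := fun i => hneg _ (heig i)
  choose n hn1 hn2 using hn'
  have hre : ∀ i, (lam i).re < 0 := by
    intro i; rw [hn2 i]; simpa using hn1 i
  -- linear independence of equal-weight primitive basis vectors
  have hfib : ∀ μ : ℂ, LinearIndependent ℂ (fun i : {i : I // lam i = μ} => v i.val) := by
    intro μ
    have hLIb : LinearIndependent ℂ (fun j : Fin (d μ) => ((bb μ j : P μ) : M)) :=
      (bb μ).linearIndependent.map' (P μ).subtype (Submodule.ker_subtype _)
    have heqf : (fun i : {i : I // lam i = μ} => v i.val) =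
        (fun j : Fin (d μ) => ((bb μ j : P μ) : M)) ∘
          (fun i : {i : I // lam i = μ} =>
            (⟨i.val.val.2, by have h := i.val.prop; rwa [show ((i.val : I) : ℂ × ℕ).1 = μ from i.prop] at h⟩ : Fin (d μ))) := by
      funext i
      obtain ⟨⟨⟨μ', k⟩, hk⟩, hi⟩ := i
      have hμ' : μ' = μ := hi
      subst hμ'
      rfl
    rw [heqf]
    refine hLIb.comp _ ?_
    intro a b hab
    apply Subtype.ext; apply Subtype.ext; apply Prod.ext
    · exact (a.prop : lam a.val = μ).trans (b.prop : lam b.val = μ).symm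
    · exact congrArg Fin.val hab
  have hLI : LinearIndependent ℂ (fun p : I × ℕ => (F ^ p.2) (v p.1)) :=
    Sl2Aux.full_LI hHE hHF hEF hvH hvE hre hfib
  set N : I → Submodule ℂ M :=
    fun i => Submodule.span ℂ (Set.range fun k : ℕ => (F ^ k) (v i)) with hN
  refine ⟨I, v, n, hvne, hn1, hvE, ?_, ?_, ?_, ?_, ?_⟩
  · intro i; rw [hvH i, hn2 i]
  · -- per-i independence
    intro i
    exact hLI.comp (fun k => (i, k)) (fun k₁ k₂ h => (Prod.mk.injEq _ _ _ _ ▸ h).2)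
  · -- stability
    intro i m hm
    have key : ∀ (T : Module.End ℂ M), (∀ k : ℕ, T ((F ^ k) (v i)) ∈ N i) →
        T m ∈ N i := by
      intro T hT
      have hle : N i ≤ Submodule.comap T (N i) := by
        rw [hN]
        rw [Submodule.span_le]
        rintro _ ⟨k, rfl⟩
        exact hT k
      exact hle hm
    refine ⟨key E ?_, key H ?_, key F ?_⟩
    · intro k
      match k with
      | 0 =>
        simp only [pow_zero, Module.End.one_apply, hvE i]
        exact Submodule.zero_mem _
      | k + 1 =>
        rw [Sl2Aux.E_F_pow hHE hHF hEF (hvH i) (hvE i)]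
        exact Submodule.smul_mem _ _ (Submodule.subset_span ⟨k, rfl⟩)
    · intro k
      rw [Sl2Aux.weight_F_pow hHF (hvH i)]
      exact Submodule.smul_mem _ _ (Submodule.subset_span ⟨k, rfl⟩)
    · intro k
      refine Submodule.subset_span ⟨k + 1, ?_⟩
      show (F ^ (k + 1)) (v i) = F ((F ^ k) (v i))
      rw [pow_succ']; rfl
  · -- independence
    intro i
    have h1 : N i ≤ Submodule.span ℂ
        ((fun p : I × ℕ => (F ^ p.2) (v p.1)) '' {p | p.1 = i}) := by
      rw [hN, Submodule.span_le]
      rintro _ ⟨k, rfl⟩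
      exact Submodule.subset_span ⟨(i, k), rfl, rfl⟩
    have h2 : (⨆ (j) (_ : j ≠ i), N j) ≤ Submodule.span ℂ
        ((fun p : I × ℕ => (F ^ p.2) (v p.1)) '' {p | p.1 ≠ i}) := by
      refine iSup₂_le fun j hj => ?_
      rw [hN, Submodule.span_le]
      rintro _ ⟨k, rfl⟩
      exact Submodule.subset_span ⟨(j, k), hj, rfl⟩
    exact (hLI.disjoint_span_image (s := {p | p.1 = i}) (t := {p | p.1 ≠ i})
      (Set.disjoint_left.mpr fun p hp hp' => hp' hp)).mono h1 h2
  · -- spanning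
    set U : ℂ → Submodule ℂ M := fun μ =>
      Submodule.span ℂ {m | ∃ (i : I) (k : ℕ), lam i = μ + 2 * k ∧ m = (F ^ k) (v i)} with hU
    have hUle : ∀ μ, U μ ≤ ⨆ i, N i := by
      intro μ
      rw [hU, Submodule.span_le]
      rintro _ ⟨i, k, hik, rfl⟩
      exact le_iSup N i (Submodule.subset_span ⟨k, rfl⟩)
    have hUeig : ∀ μ, U μ ≤ H.eigenspace μ := by
      intro μ
      rw [hU, Submodule.span_le]
      rintro _ ⟨i, k, hik, rfl⟩
      rw [SetLike.mem_coe, Module.End.mem_eigenspace_iff,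
        Sl2Aux.weight_F_pow hHF (hvH i), hik]
      ring_nf
    have hPU : ∀ μ, P μ ≤ U μ := by
      intro μ
      have hPs : P μ = Submodule.span ℂ
          (Set.range (fun j : Fin (d μ) => ((bb μ j : P μ) : M))) := by
        conv_lhs => rw [← Submodule.map_subtype_top (P μ), ← (bb μ).span_eq]
        rw [Submodule.map_span]
        congr 1
        rw [← Set.range_comp]
        rfl
      rw [hPs, Submodule.span_le]
      rintro _ ⟨j, rfl⟩
      refine Submodule.subset_span ⟨⟨(μ, j.val), j.isLt⟩, 0, by simp [hlamdef], by simp [hv]⟩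
    have claim : ∀ (j : ℕ) (μ : ℂ) (w : M), H w = μ • w → (E ^ j) w = 0 → w ∈ U μ := by
      intro j
      induction j with
      | zero =>
        intro μ w hwH h0
        simp only [pow_zero, Module.End.one_apply] at h0
        rw [h0]
        exact Submodule.zero_mem _
      | succ j IH =>
        intro μ w hwH hj
        have hw' : H (E w) = (μ + 2) • E w := by
          rw [Sl2Aux.commHE hHE, hwH, map_smul, ← add_smul]
        have hEj : (E ^ j) (E w) = 0 := by
          have hh : (E ^ (j + 1)) w = (E ^ j) (E w) := by rw [pow_succ]; rfl
          rw [← hh]; exact hj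
        have hmem := IH (μ + 2) (E w) hw' hEj
        have hmap : U (μ + 2) ≤ Submodule.map E (U μ) := by
          rw [hU, Submodule.span_le]
          rintro _ ⟨i, k, hik, rfl⟩
          set c : ℂ := ((k : ℂ) + 1) * (lam i - k) with hc
          have hc0 : c ≠ 0 := by
            refine mul_ne_zero (Nat.cast_add_one_ne_zero k) ?_
            intro h
            have := congrArg Complex.re h
            simp only [Complex.sub_re, Complex.natCast_re, Complex.zero_re] at this
            have hk0 : (0 : ℝ) ≤ (k : ℝ) := Nat.cast_nonneg k
            linarith [hre i]
          refine ⟨c⁻¹ • (F ^ (k + 1)) (v i), ?_, ?_⟩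
          · refine Submodule.smul_mem _ _ (Submodule.subset_span ⟨i, k + 1, ?_, rfl⟩)
            rw [hik]; push_cast; ring
          · rw [map_smul, Sl2Aux.E_F_pow hHE hHF hEF (hvH i) (hvE i), ← hc,
              smul_smul, inv_mul_cancel₀ hc0, one_smul]
        obtain ⟨u, huU, huE⟩ := hmap hmem
        have huH : H u = μ • u := Module.End.mem_eigenspace_iff.mp (hUeig μ huU)
        have hwu : w - u ∈ P μ := by
          refine Submodule.mem_inf.mpr ⟨?_, ?_⟩
          · rw [LinearMap.mem_ker, map_sub, huE, sub_self]
          · rw [Module.End.mem_eigenspace_iff, map_sub, hwH, huH, smul_sub]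
        have : w = (w - u) + u := by abel
        rw [this]
        exact Submodule.add_mem _ (hPU μ hwu) huU
    rw [eq_top_iff, ← hdiag]
    refine iSup_le fun μ => ?_
    intro w hw
    have hwH : H w = μ • w := Module.End.mem_eigenspace_iff.mp hw
    obtain ⟨j, hj⟩ := Sl2Aux.exists_E_pow_zero hHE hneg hwH
    exact hUle μ (claim j μ w hwH hj)
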